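/- Let (Ω(S),T) be a substitution dynamical system satisfying condition (BG), and let V be a finite subset of W(S) all of whose elements contain at least one letter of C. Then there exist θ>0 and constants λ(V),ρ(V)>0 such that λ(V)·θ^n ≤ |S^n(v)| ≤ ρ(V)·θ^n for all n∈ℕ and all v∈V. -/

import Mathlib

open List Filter Topology MeasureTheory

namespace SubstLR

variable {A : Type*}

/-- Apply the substitution `S` to a finite word. -/
def subst (S : A → List A) (w : List A) : List A := w.flatMap S

/-- `iter S n w` is `S^n(w)`. -/
def iter (S : A → List A) (n : ℕ) (w : List A) : List A := (subst S)^[n] w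

/-- The set `W(S)` of finite words associated to `S`. -/
def WS (S : A → List A) : Set (List A) := {w | ∃ (a : A) (n : ℕ), w <:+: iter S n [a]}

/-- `w` is a finite factor of the two-sided infinite word `ω`. -/
def IsFactor (w : List A) (ω : ℤ → A) : Prop :=
  ∃ k : ℤ, w = (List.range w.length).map fun i => ω (k + i)

/-- The subshift `Ω(S)` associated to `S`. -/
def OmegaS (S : A → List A) : Set (ℤ → A) := {ω | ∀ w, IsFactor w ω → w ∈ WS S}

/-- The set `W(Ω(S))` of finite factors of elements of `Ω(S)`. -/
def WOmega (S : A → List A) : Set (List A) := {w | ∃ ω ∈ OmegaS S, IsFactor w ω}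

/-- Condition (ℓ): `|S^n(e)| → ∞`. -/
def CondL (S : A → List A) (e : A) : Prop :=
  Tendsto (fun n => (iter S n [e]).length) atTop atTop

/-- Condition (o): every letter occurs in some `S^n(e)`. -/
def CondO (S : A → List A) (e : A) : Prop := ∀ a : A, ∃ n : ℕ, a ∈ iter S n [e]

/-- Condition (c): `W(S) = W(Ω(S))`. -/
def CondC (S : A → List A) : Prop := WS S = WOmega S

/-- `(Ω(S),T)` is a substitution dynamical system. -/
def IsSubstSystem (S : A → List A) : Prop := (∃ e, CondL S e ∧ CondO S e) ∧ CondC S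

/-- `v` occurs with bounded gaps in the set of words `W`. -/
def BddGaps (v : List A) (W : Set (List A)) : Prop :=
  ∃ L : ℕ, 0 < L ∧ ∀ w ∈ W, L ≤ w.length → v <:+: w

/-- Condition (BG) for the letter `e`. -/
def BG (S : A → List A) (e : A) : Prop := CondL S e ∧ CondO S e ∧ BddGaps [e] (WS S)

/-- The shift by `k`; `shift 1` is the map `T`. -/
def shift (k : ℤ) (ω : ℤ → A) : ℤ → A := fun n => ω (n + k)

/-- `(Ω(S),T)` is minimal: every orbit is dense in `Ω(S)`. -/
def Minimal [TopologicalSpace A] (S : A → List A) : Prop :=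
  ∀ ω ∈ OmegaS S, OmegaS S ⊆ closure {ω' | ∃ k : ℤ, ω' = shift k ω}

/-- `(Ω(S),T)` is linearly repetitive. -/
def LinRep (S : A → List A) : Prop :=
  ∃ C : ℝ, 0 < C ∧ ∀ v ∈ WS S, ∀ w ∈ WS S, C * v.length ≤ (w.length : ℝ) → v <:+: w

/-- `(Ω(S),T)` is aperiodic. -/
def Aperiodic (S : A → List A) : Prop :=
  ∀ ω ∈ OmegaS S, ∀ k : ℤ, k ≠ 0 → shift k ω ≠ ω

/-- The set `B` of letters `a` with `limsup |S^n(a)| < ∞`. -/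
def Bset (S : A → List A) : Set A := {a | ∃ M : ℕ, ∀ n, (iter S n [a]).length ≤ M}

/-- The set `C = A ∖ B`. -/
def Cset (S : A → List A) : Set A := (Bset S)ᶜ

open Classical in
/-- `tilde S w` is the word obtained from `w` by deleting all letters of `B`. -/
noncomputable def tilde (S : A → List A) (w : List A) : List A :=
  w.filter fun x => decide (x ∈ Cset S)

/-- The induced substitution `S̃`. -/
noncomputable def tildeS (S : A → List A) : A → List A := fun x => tilde S (S x)



section Aux
variable {A : Type*} {S : A → List A}

lemma subst_append (S : A → List A) (x y : List A) :
    subst S (x ++ y) = subst S x ++ subst S y := List.flatMap_append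

lemma iter_succ' (S : A → List A) (n : ℕ) (w : List A) :
    iter S (n + 1) w = subst S (iter S n w) :=
  Function.iterate_succ_apply' _ _ _

lemma iter_add (S : A → List A) (m n : ℕ) (w : List A) :
    iter S (m + n) w = iter S m (iter S n w) :=
  Function.iterate_add_apply _ _ _ _

lemma iter_append (S : A → List A) (n : ℕ) (x y : List A) :
    iter S n (x ++ y) = iter S n x ++ iter S n y := by
  induction n generalizing x y with
  | zero => rfl
  | succ n ih => rw [iter_succ', iter_succ', iter_succ', ih, subst_append]

lemma iter_nil (S : A → List A) (n : ℕ) : iter S n [] = [] := by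
  induction n with
  | zero => rfl
  | succ n ih => rw [iter_succ', ih]; rfl

lemma iter_infix {x y : List A} (S : A → List A) (n : ℕ) (h : x <:+: y) :
    iter S n x <:+: iter S n y := by
  obtain ⟨s, t, rfl⟩ := h
  rw [iter_append, iter_append]
  exact ⟨iter S n s, iter S n t, rfl⟩

lemma mem_WS_of_infix {w x : List A} (hw : w ∈ WS S) (h : x <:+: w) : x ∈ WS S := by
  obtain ⟨a, n, hn⟩ := hw
  exact ⟨a, n, h.trans hn⟩

lemma iter_mem_WS {w : List A} (hw : w ∈ WS S) (m : ℕ) : iter S m w ∈ WS S := by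
  obtain ⟨a, n, hn⟩ := hw
  exact ⟨a, m + n, by rw [iter_add]; exact iter_infix S m hn⟩

lemma length_iter_le (S : A → List A) (m : ℕ) (w : List A) (c : ℕ)
    (h : ∀ a ∈ w, (iter S m [a]).length ≤ c) :
    (iter S m w).length ≤ w.length * c := by
  induction w with
  | nil => simp [iter_nil]
  | cons a t ih =>
      have : iter S m (a :: t) = iter S m [a] ++ iter S m t := iter_append S m [a] t
      rw [this]
      simp only [List.length_append, List.length_cons]
      have h1 := h a (List.mem_cons_self)
      have h2 := ih fun b hb => h b (List.mem_cons_of_mem _ hb)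
      nlinarith

lemma length_iter_ge (S : A → List A) {c : A} {v : List A} (hc : c ∈ v) (n : ℕ) :
    (iter S n [c]).length ≤ (iter S n v).length := by
  obtain ⟨s, t, rfl⟩ := List.append_of_mem hc
  have : iter S n (s ++ c :: t) = iter S n s ++ (iter S n [c] ++ iter S n t) := by
    rw [← iter_append, ← iter_append]; rfl
  rw [this]; simp only [List.length_append]; omega

lemma infix_singleton_of_mem {a : A} {l : List A} (h : a ∈ l) : [a] <:+: l := by
  obtain ⟨s, t, rfl⟩ := List.append_of_mem h
  exact ⟨s, t, by simp⟩

end Aux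

set_option maxHeartbeats 1000000 in
/-- under (BG), for any finite `V ⊆ W(S)` whose elements all contain a letter
of `C`, there are `θ > 0` and `λ(V), ρ(V) > 0` with `λ(V)θ^n ≤ |S^n(v)| ≤ ρ(V)θ^n`. -/
theorem statement7 {A : Type*} [Fintype A]
    (S : A → List A) (hS : IsSubstSystem S) (hBG : ∃ e : A, BG S e)
    (V : Set (List A)) (hVfin : V.Finite) (hVW : V ⊆ WS S)
    (hVC : ∀ v ∈ V, ∃ c ∈ v, c ∈ Cset S) :
    ∃ θ : ℝ, 0 < θ ∧ ∃ lam rho : ℝ, 0 < lam ∧ 0 < rho ∧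
      ∀ (n : ℕ), ∀ v ∈ V, lam * θ ^ n ≤ ((iter S n v).length : ℝ) ∧
        ((iter S n v).length : ℝ) ≤ rho * θ ^ n := by
  classical
  obtain ⟨e, hLim, hO, L, hLpos, hGap⟩ := hBG
  set u : ℕ → ℕ := fun n => (iter S n [e]).length with hu_def
  have hu0 : u 0 = 1 := rfl
  have huLim : Tendsto u atTop atTop := hLim
  -- the constant M
  set M : ℕ := (Finset.univ.sup fun a : A => (S a).length) + 1 with hM_def
  have hM1 : 1 ≤ M := Nat.le_add_left 1 _
  have hiter1 : ∀ a : A, iter S 1 [a] = S a := by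
    intro a; show subst S [a] = S a; simp [subst]
  have hSa : ∀ a : A, (iter S 1 [a]).length ≤ M := by
    intro a; rw [hiter1]
    have h1 : (S a).length ≤ Finset.univ.sup fun a : A => (S a).length :=
      Finset.le_sup (f := fun a : A => (S a).length) (Finset.mem_univ a)
    omega
  have hsub : ∀ (w : List A) (n : ℕ),
      (iter S (n + 1) w).length ≤ M * (iter S n w).length := by
    intro w n
    have h1 : iter S (n + 1) w = iter S 1 (iter S n w) := by
      rw [← iter_add]; ring_nf
    rw [h1]
    calc (iter S 1 (iter S n w)).length ≤ (iter S n w).length * M :=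
          length_iter_le S 1 _ M (fun a _ => hSa a)
      _ = M * (iter S n w).length := Nat.mul_comm _ _
  have hMpow : ∀ (w : List A) (n j : ℕ),
      (iter S (n + j) w).length ≤ M ^ j * (iter S n w).length := by
    intro w n j
    induction j with
    | zero => simp
    | succ j ih =>
        have : n + (j + 1) = (n + j) + 1 := by ring
        rw [this]
        calc (iter S ((n + j) + 1) w).length ≤ M * (iter S (n + j) w).length := hsub w _
          _ ≤ M * (M ^ j * (iter S n w).length) := Nat.mul_le_mul_left _ ih
          _ = M ^ (j + 1) * (iter S n w).length := by ring
  -- u is everywhere positive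
  have hne : ∀ n, 1 ≤ u n := by
    intro n
    by_contra h
    have hnil : iter S n [e] = [] := by
      have h2 : u n = 0 := by omega
      exact List.length_eq_zero_iff.mp h2
    obtain ⟨m, ⟨hm1, hm2⟩⟩ := ((huLim.eventually_ge_atTop 1).and (eventually_ge_atTop n)).exists
    have : u m = 0 := by
      have h1 : m = (m - n) + n := by omega
      have : iter S m [e] = [] := by
        rw [h1, iter_add, hnil, iter_nil]
      simp [u, this]
    omega
  -- choice of k with e occurring in S^k(e)
  have hWSe : ∀ n, iter S n [e] ∈ WS S := fun n => ⟨e, n, List.infix_refl _⟩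
  obtain ⟨k, hkL, hk1⟩ := ((huLim.eventually_ge_atTop L).and (eventually_ge_atTop 1)).exists
  have hek : [e] <:+: iter S k [e] := hGap _ (hWSe k) hkL
  have hmono1 : ∀ j, u j ≤ u (j + k) := by
    intro j
    have : iter S j [e] <:+: iter S (j + k) [e] := by
      rw [iter_add]; exact iter_infix S j hek
    exact this.length_le
  have hmonok : ∀ (i t : ℕ), u i ≤ u (i + k * t) := by
    intro i t
    induction t with
    | zero => simp
    | succ t ih =>
        have : i + k * (t + 1) = (i + k * t) + k := by ring
        rw [this]
        exact le_trans ih (hmono1 _)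
  -- N0 and U
  obtain ⟨N0, hN0⟩ := (huLim.eventually_ge_atTop (2 * L)).exists_forall_of_atTop
  set U : ℕ := (Finset.sup (Finset.range N0) u) + 1 with hU_def
  have hU : ∀ n, n < N0 → u n ≤ U := by
    intro n hn
    have h1 : u n ≤ Finset.sup (Finset.range N0) u :=
      Finset.le_sup (Finset.mem_range.mpr hn)
    omega
  -- repeated occurrences of e give lower bounds
  have hgaps : ∀ (j : ℕ) (w : List A), w ∈ WS S → j * L ≤ w.length →
      ∀ m, j * u m ≤ (iter S m w).length := by
    intro j
    induction j with
    | zero => intro w _ _ m; simp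
    | succ j ih =>
        intro w hw hlen m
        have hLle : L ≤ w.length := by nlinarith
        have htake : w.take L ∈ WS S :=
          mem_WS_of_infix hw (w.take_prefix L).isInfix
        have htlen : (w.take L).length = L := by
          rw [List.length_take]; omega
        have he : [e] <:+: w.take L := hGap _ htake (by omega)
        obtain ⟨x, z, hxz⟩ := he
        have hw_eq : w = x ++ [e] ++ (z ++ w.drop L) := by
          conv_lhs => rw [← List.take_append_drop L w]
          rw [← hxz]; simp
        have hxlen : x.length + 1 + z.length = L := by
          have := congrArg List.length hxz
          simp at this; omega
        set y := z ++ w.drop L with hy_def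
        have hylen : x.length + 1 + y.length = w.length := by
          have h9 := congrArg List.length hw_eq
          simp [hy_def] at h9 ⊢
          omega
        have hy_ws : y ∈ WS S := by
          refine mem_WS_of_infix hw ?_
          refine List.IsSuffix.isInfix ⟨x ++ [e], ?_⟩
          rw [hw_eq]
        have hyL : j * L ≤ y.length := by
          have h8 : (j + 1) * L = j * L + L := by ring
          omega
        have hiy := ih y hy_ws hyL m
        have hsplit : iter S m w = iter S m x ++ (iter S m [e] ++ iter S m y) := by
          rw [hw_eq, iter_append, iter_append]; simp
        rw [hsplit]
        simp only [List.length_append]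
        have : u m ≤ (iter S m [e]).length := le_refl _
        nlinarith
  -- the CondO exponent p
  choose g hg using hO
  set p : ℕ := Finset.univ.sup g with hp_def
  have hgp : ∀ a : A, g a ≤ p := fun a => Finset.le_sup (Finset.mem_univ a)
  have hletter : ∀ (a : A) (n : ℕ), (iter S n [a]).length ≤ M ^ p * u n := by
    intro a n
    have h1 : [a] <:+: iter S (g a) [e] := infix_singleton_of_mem (hg a)
    have h2 : iter S n [a] <:+: iter S (n + g a) [e] := by
      rw [iter_add]; exact iter_infix S n h1
    have h3 : (iter S n [a]).length ≤ u (n + g a) := h2.length_le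
    have h4 : u (n + g a) ≤ M ^ (g a) * u n := hMpow [e] n (g a)
    have h5 : M ^ (g a) ≤ M ^ p := Nat.pow_le_pow_right hM1 (hgp a)
    calc (iter S n [a]).length ≤ M ^ (g a) * u n := le_trans h3 h4
      _ ≤ M ^ p * u n := Nat.mul_le_mul_right _ h5
  -- submultiplicativity
  have hsubmul : ∀ m n, u (m + n) ≤ M ^ p * (u m * u n) := by
    intro m n
    have h1 : u (m + n) = (iter S m (iter S n [e])).length := by
      rw [hu_def]; simp only; rw [iter_add]
    rw [h1]
    calc (iter S m (iter S n [e])).length ≤ (iter S n [e]).length * (M ^ p * u m) :=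
          length_iter_le S m _ _ (fun a _ => hletter a m)
      _ = M ^ p * (u m * u n) := by rw [hu_def]; ring
  -- supermultiplicativity
  have hsupmul : ∀ m n, u m * u n ≤ (2 * L + U * M ^ k) * u (m + n) := by
    intro m n
    have h1 : u (m + n) = (iter S m (iter S n [e])).length := by
      rw [hu_def]; simp only; rw [iter_add]
    by_cases hcase : 2 * L ≤ u n
    · set j : ℕ := u n / L with hj_def
      have hjL : j * L ≤ u n := by rw [hj_def, Nat.mul_comm]; exact Nat.mul_div_le _ _
      have hj2 : u n ≤ 2 * (j * L) := by
        have h5 := Nat.div_add_mod (u n) L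
        have h6 := Nat.mod_lt (u n) hLpos
        have h7 : L * (u n / L) = j * L := by rw [hj_def]; ring
        omega
      have h3 : j * u m ≤ u (m + n) := by
        rw [h1]; exact hgaps j (iter S n [e]) (hWSe n) hjL m
      nlinarith [hne (m + n), Nat.zero_le (U * M ^ k * u (m + n))]
    · have hnN0 : n < N0 := by
        by_contra h
        exact hcase (hN0 n (by omega))
      have hun : u n ≤ U := hU n hnN0
      -- u m ≤ M ^ k * u (m + n)
      set r : ℕ := n % k with hr_def
      have hrk : r < k := Nat.mod_lt _ (by omega)
      have ha1 : u m ≤ u (m + k) := hmono1 m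
      have ha2 : u (m + k) ≤ M ^ (k - r) * u (m + r) := by
        have : m + k = (m + r) + (k - r) := by omega
        rw [this]; exact hMpow [e] (m + r) (k - r)
      have ha3 : u (m + r) ≤ u (m + n) := by
        have h4 : (m + r) + k * (n / k) = m + n := by
          have := Nat.mod_add_div n k
          omega
        calc u (m + r) ≤ u ((m + r) + k * (n / k)) := hmonok _ _
          _ = u (m + n) := by rw [h4]
      have ha4 : M ^ (k - r) ≤ M ^ k := Nat.pow_le_pow_right hM1 (by omega)
      have ha5 : u m ≤ M ^ k * u (m + n) := by
        calc u m ≤ M ^ (k - r) * u (m + r) := le_trans ha1 ha2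
          _ ≤ M ^ k * u (m + n) := Nat.mul_le_mul ha4 ha3
      calc u m * u n ≤ (M ^ k * u (m + n)) * U := Nat.mul_le_mul ha5 hun
        _ ≤ (2 * L + U * M ^ k) * u (m + n) := by ring_nf; nlinarith
  -- the single constant K
  set K : ℕ := M ^ p + (2 * L + U * M ^ k) + 1 with hK_def
  have hK1 : 1 ≤ K := by omega
  have hKA : ∀ m n, u (m + n) ≤ K * (u m * u n) := by
    intro m n
    calc u (m + n) ≤ M ^ p * (u m * u n) := hsubmul m n
      _ ≤ K * (u m * u n) := Nat.mul_le_mul_right _ (by omega)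
  have hKB : ∀ m n, u m * u n ≤ K * u (m + n) := by
    intro m n
    calc u m * u n ≤ (2 * L + U * M ^ k) * u (m + n) := hsupmul m n
      _ ≤ K * u (m + n) := Nat.mul_le_mul_right _ (by omega)
  -- move to the reals
  set Kr : ℝ := (K : ℝ) with hKr_def
  have hKr1 : (1 : ℝ) ≤ Kr := by rw [hKr_def]; exact_mod_cast hK1
  have hKr0 : (0 : ℝ) < Kr := by linarith
  have hupos : ∀ n, (0 : ℝ) < (u n : ℝ) := by
    intro n; exact_mod_cast hne n
  set vv : ℕ → ℝ := fun n => (u n : ℝ) / Kr with hvv_def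
  set ww : ℕ → ℝ := fun n => Kr * (u n : ℝ) with hww_def
  have hv_pos : ∀ n, 0 < vv n := fun n => div_pos (hupos n) hKr0
  have hw_pos : ∀ n, 0 < ww n := fun n => mul_pos hKr0 (hupos n)
  have hv_supmul : ∀ m n, vv m * vv n ≤ vv (m + n) := by
    intro m n
    have h1 : (u m : ℝ) * (u n : ℝ) ≤ Kr * (u (m + n) : ℝ) := by
      rw [hKr_def]; exact_mod_cast hKB m n
    rw [hvv_def]
    simp only
    rw [div_mul_div_comm, div_le_div_iff₀ (by positivity) hKr0]
    calc (u m : ℝ) * (u n) * Kr ≤ (Kr * u (m + n)) * Kr :=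
          mul_le_mul_of_nonneg_right h1 hKr0.le
      _ = (u (m + n) : ℝ) * (Kr * Kr) := by ring
  have hw_submul : ∀ m n, ww (m + n) ≤ ww m * ww n := by
    intro m n
    have h1 : (u (m + n) : ℝ) ≤ Kr * ((u m : ℝ) * (u n : ℝ)) := by
      rw [hKr_def]; exact_mod_cast hKA m n
    rw [hww_def]
    simp only
    calc Kr * (u (m + n) : ℝ) ≤ Kr * (Kr * ((u m : ℝ) * (u n : ℝ))) :=
          mul_le_mul_of_nonneg_left h1 hKr0.le
      _ = (Kr * u m) * (Kr * u n) := by ring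
  have hv_pow : ∀ (m j : ℕ), 1 ≤ j → vv m ^ j ≤ vv (m * j) := by
    intro m j hj
    induction j with
    | zero => omega
    | succ j ih =>
        by_cases hj0 : j = 0
        · subst hj0; simp
        · have h1 := ih (by omega)
          calc vv m ^ (j + 1) = vv m ^ j * vv m := by ring
            _ ≤ vv (m * j) * vv m := by
                have := (hv_pos m).le
                exact mul_le_mul_of_nonneg_right h1 this
            _ ≤ vv (m * j + m) := hv_supmul _ _
            _ = vv (m * (j + 1)) := by ring_nf
  have hw_pow : ∀ (j m : ℕ), 1 ≤ m → ww (j * m) ≤ ww j ^ m := by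
    intro j m hm
    induction m with
    | zero => omega
    | succ m ih =>
        by_cases hm0 : m = 0
        · subst hm0; simp
        · have h1 := ih (by omega)
          calc ww (j * (m + 1)) = ww (j * m + j) := by ring_nf
            _ ≤ ww (j * m) * ww j := hw_submul _ _
            _ ≤ ww j ^ m * ww j := by
                have := (hw_pos j).le
                exact mul_le_mul_of_nonneg_right h1 this
            _ = ww j ^ (m + 1) := by ring
  have hvw_le : ∀ n, vv n ≤ ww n := by
    intro n
    rw [hvv_def, hww_def]
    simp only
    rw [div_le_iff₀ hKr0]
    calc (u n : ℝ) ≤ Kr * u n := le_mul_of_one_le_left (hupos n).le hKr1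
      _ ≤ Kr * u n * Kr := le_mul_of_one_le_right (by positivity) hKr1
  -- cross inequality
  have hcross : ∀ (m j : ℕ), 1 ≤ m → 1 ≤ j →
      vv m ^ ((m : ℝ)⁻¹) ≤ ww j ^ ((j : ℝ)⁻¹) := by
    intro m j hm hj
    have hkey : vv m ^ j ≤ ww j ^ m := by
      calc vv m ^ j ≤ vv (m * j) := hv_pow m j hj
        _ ≤ ww (m * j) := hvw_le _
        _ = ww (j * m) := by ring_nf
        _ ≤ ww j ^ m := hw_pow j m hm
    set x : ℝ := vv m ^ ((m : ℝ)⁻¹) with hx_def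
    set y : ℝ := ww j ^ ((j : ℝ)⁻¹) with hy2_def
    have hx0 : 0 ≤ x := Real.rpow_nonneg (hv_pos m).le _
    have hy0 : 0 ≤ y := Real.rpow_nonneg (hw_pos j).le _
    have hxm : x ^ m = vv m := Real.rpow_inv_natCast_pow (hv_pos m).le (by omega)
    have hyj : y ^ j = ww j := Real.rpow_inv_natCast_pow (hw_pos j).le (by omega)
    have hpow : x ^ (m * j) ≤ y ^ (m * j) := by
      rw [pow_mul, hxm, mul_comm m j, pow_mul, hyj]
      exact hkey
    exact le_of_pow_le_pow_left₀ (by positivity) hy0 hpow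
  -- definition of theta
  set Θ : Set ℝ := Set.range (fun m : ℕ => vv (m + 1) ^ (((m + 1 : ℕ) : ℝ)⁻¹)) with hΘ_def
  have hΘne : Θ.Nonempty := ⟨_, ⟨0, rfl⟩⟩
  have hΘbdd : BddAbove Θ := by
    refine ⟨ww 1 ^ ((1 : ℕ) : ℝ)⁻¹, ?_⟩
    rintro x ⟨m, rfl⟩
    exact hcross (m + 1) 1 (by omega) le_rfl
  set θ : ℝ := sSup Θ with hθ_def
  have hθ_ge : ∀ m : ℕ, vv (m + 1) ^ (((m + 1 : ℕ) : ℝ)⁻¹) ≤ θ :=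
    fun m => le_csSup hΘbdd ⟨m, rfl⟩
  have hθ_le : ∀ j : ℕ, 1 ≤ j → θ ≤ ww j ^ ((j : ℝ)⁻¹) := by
    intro j hj
    refine csSup_le hΘne ?_
    rintro x ⟨m, rfl⟩
    exact hcross (m + 1) j (by omega) hj
  have hθpos : 0 < θ := by
    have h1 : vv 1 ^ (((1 : ℕ) : ℝ)⁻¹) ≤ θ := hθ_ge 0
    have h2 : 0 < vv 1 ^ (((1 : ℕ) : ℝ)⁻¹) := Real.rpow_pos_of_pos (hv_pos 1) _
    linarith
  -- two-sided bounds for u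
  have hupper : ∀ n, (u n : ℝ) ≤ Kr * θ ^ n := by
    intro n
    match n with
    | 0 => simp [hu0]; linarith
    | Nat.succ m =>
        have h1 : vv (m + 1) ≤ θ ^ (m + 1) := by
          have h2 : (vv (m + 1) ^ (((m + 1 : ℕ) : ℝ)⁻¹)) ^ (m + 1) = vv (m + 1) :=
            Real.rpow_inv_natCast_pow (hv_pos _).le (by omega)
          calc vv (m + 1) = (vv (m + 1) ^ (((m + 1 : ℕ) : ℝ)⁻¹)) ^ (m + 1) := h2.symm
            _ ≤ θ ^ (m + 1) := pow_le_pow_left₀ (Real.rpow_nonneg (hv_pos _).le _) (hθ_ge m) _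
        have h3 : (u (m + 1) : ℝ) = Kr * vv (m + 1) := by
          rw [hvv_def]; field_simp
        rw [h3]
        exact mul_le_mul_of_nonneg_left h1 hKr0.le
  have hlower : ∀ n, θ ^ n ≤ Kr * (u n : ℝ) := by
    intro n
    match n with
    | 0 => simp [hu0]; linarith
    | Nat.succ m =>
        have h1 : θ ^ (m + 1) ≤ ww (m + 1) := by
          have h2 : (ww (m + 1) ^ (((m + 1 : ℕ) : ℝ)⁻¹)) ^ (m + 1) = ww (m + 1) :=
            Real.rpow_inv_natCast_pow (hw_pos _).le (by omega)
          calc θ ^ (m + 1) ≤ (ww (m + 1) ^ (((m + 1 : ℕ) : ℝ)⁻¹)) ^ (m + 1) :=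
                pow_le_pow_left₀ hθpos.le (hθ_le (m + 1) (by omega)) _
            _ = ww (m + 1) := h2
        calc θ ^ (m + 1) ≤ ww (m + 1) := h1
          _ = Kr * (u (m + 1) : ℝ) := rfl
  have hθ1 : 1 ≤ θ := by
    by_contra h
    push_neg at h
    have hbd : ∀ n, (u n : ℝ) ≤ Kr := by
      intro n
      have h1 : θ ^ n ≤ 1 := pow_le_one₀ hθpos.le h.le
      have := hupper n
      nlinarith
    obtain ⟨n, hn⟩ := (huLim.eventually_ge_atTop (K + 1)).exists
    have h2 : ((K : ℕ) : ℝ) + 1 ≤ (u n : ℝ) := by exact_mod_cast hn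
    have := hbd n
    rw [hKr_def] at this
    linarith
  -- positivity of iterates of letters of C
  have hCpos : ∀ c : A, c ∈ Cset S → ∀ n, 1 ≤ (iter S n [c]).length := by
    intro c hc n
    by_contra h
    have hnil : iter S n [c] = [] := List.length_eq_zero_iff.mp (by omega)
    refine hc ⟨Finset.sup (Finset.range (n + 1)) (fun i => (iter S i [c]).length), ?_⟩
    intro j
    by_cases hj : j ≤ n
    · exact Finset.le_sup (f := fun i => (iter S i [c]).length)
        (Finset.mem_range.mpr (by omega))
    · have h1 : j = (j - n) + n := by omega
      have h2 : iter S j [c] = [] := by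
        rw [h1, iter_add, hnil, iter_nil]
      simp [h2]
  -- growth of letters of C
  have hCgrow : ∀ c : A, c ∈ Cset S → ∃ m, L ≤ (iter S m [c]).length := by
    intro c hc
    have h1 : ¬ ∃ M0 : ℕ, ∀ n, (iter S n [c]).length ≤ M0 := hc
    push_neg at h1
    obtain ⟨m, hm⟩ := h1 L
    exact ⟨m, hm.le⟩
  -- per-word lower bound
  have Plower : ∀ v ∈ V, ∃ m : ℕ, ∀ n,
      θ ^ n ≤ Kr * θ ^ m * ((iter S n v).length : ℝ) := by
    intro v hv
    obtain ⟨c, hcv, hcC⟩ := hVC v hv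
    have hcWS : [c] ∈ WS S := mem_WS_of_infix (hVW hv) (infix_singleton_of_mem hcv)
    obtain ⟨m, hm⟩ := hCgrow c hcC
    have hmWS : iter S m [c] ∈ WS S := iter_mem_WS hcWS m
    have heIn : [e] <:+: iter S m [c] := hGap _ hmWS hm
    have hkey : ∀ n', u n' ≤ (iter S (n' + m) [c]).length := by
      intro n'
      rw [iter_add]
      exact (iter_infix S n' heIn).length_le
    refine ⟨m, fun n => ?_⟩
    have hvlen : (iter S n [c]).length ≤ (iter S n v).length := length_iter_ge S hcv n
    have h4 : ((iter S n [c]).length : ℝ) ≤ ((iter S n v).length : ℝ) := by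
      exact_mod_cast hvlen
    by_cases hnm : m ≤ n
    · have h1 : θ ^ (n - m) ≤ Kr * (u (n - m) : ℝ) := hlower (n - m)
      have h2 : (u (n - m) : ℝ) ≤ ((iter S n [c]).length : ℝ) := by
        have h5 := hkey (n - m)
        rw [Nat.sub_add_cancel hnm] at h5
        exact_mod_cast h5
      have h3 : θ ^ n = θ ^ (n - m) * θ ^ m := by
        rw [← pow_add]; congr 1; omega
      have h6 : θ ^ (n - m) ≤ Kr * ((iter S n v).length : ℝ) := by
        calc θ ^ (n - m) ≤ Kr * (u (n - m) : ℝ) := h1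
          _ ≤ Kr * ((iter S n v).length : ℝ) :=
              mul_le_mul_of_nonneg_left (le_trans h2 h4) hKr0.le
      calc θ ^ n = θ ^ (n - m) * θ ^ m := h3
        _ ≤ (Kr * ((iter S n v).length : ℝ)) * θ ^ m :=
            mul_le_mul_of_nonneg_right h6 (pow_nonneg hθpos.le m)
        _ = Kr * θ ^ m * ((iter S n v).length : ℝ) := by ring
    · have h5 : (1 : ℝ) ≤ ((iter S n v).length : ℝ) := by
        exact_mod_cast le_trans (hCpos c hcC n) hvlen
      have h6 : θ ^ n ≤ θ ^ m := pow_le_pow_right₀ hθ1 (by omega)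
      have h7 : (0 : ℝ) < θ ^ m := pow_pos hθpos m
      calc θ ^ n ≤ θ ^ m := h6
        _ ≤ Kr * θ ^ m := le_mul_of_one_le_left h7.le hKr1
        _ = Kr * θ ^ m * 1 := (mul_one _).symm
        _ ≤ Kr * θ ^ m * ((iter S n v).length : ℝ) :=
            mul_le_mul_of_nonneg_left h5 (by positivity)
  -- uniform choice over V
  have hchoice : ∀ v : List A, ∃ m : ℕ, v ∈ V → ∀ n,
      θ ^ n ≤ Kr * θ ^ m * ((iter S n v).length : ℝ) := by
    intro v
    by_cases hv : v ∈ V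
    · obtain ⟨m, hm⟩ := Plower v hv
      exact ⟨m, fun _ => hm⟩
    · exact ⟨0, fun h => absurd h hv⟩
  choose g2 hg2 using hchoice
  set F : Finset (List A) := hVfin.toFinset with hF_def
  set mstar : ℕ := F.sup g2 with hmstar_def
  have hg2le : ∀ v ∈ V, g2 v ≤ mstar :=
    fun v hv => Finset.le_sup ((Set.Finite.mem_toFinset hVfin).mpr hv)
  set VB : ℕ := F.sup List.length + 1 with hVB_def
  have hVB : ∀ v ∈ V, v.length ≤ VB := by
    intro v hv
    have h9 : v.length ≤ F.sup List.length := by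
      rw [hF_def]
      exact Finset.le_sup (f := List.length) ((Set.Finite.mem_toFinset hVfin).mpr hv)
    omega
  have hMp : 0 < M ^ p := pow_pos (by omega) p
  refine ⟨θ, hθpos, (Kr * θ ^ mstar)⁻¹, ((VB * M ^ p * K : ℕ) : ℝ), ?_, ?_, ?_⟩
  · positivity
  · have h1 : 0 < VB * M ^ p * K := by positivity
    exact_mod_cast h1
  · intro n v hv
    constructor
    · have h1 := hg2 v hv n
      have hth : θ ^ (g2 v) ≤ θ ^ mstar := pow_le_pow_right₀ hθ1 (hg2le v hv)
      have h2 : θ ^ n ≤ Kr * θ ^ mstar * ((iter S n v).length : ℝ) := by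
        calc θ ^ n ≤ Kr * θ ^ (g2 v) * ((iter S n v).length : ℝ) := h1
          _ ≤ Kr * θ ^ mstar * ((iter S n v).length : ℝ) := by
              have hlen0 : (0 : ℝ) ≤ ((iter S n v).length : ℝ) := Nat.cast_nonneg _
              have := mul_le_mul_of_nonneg_left hth hKr0.le
              exact mul_le_mul_of_nonneg_right this hlen0
      rw [inv_mul_le_iff₀ (by positivity)]
      exact h2
    · have c1 : (iter S n v).length ≤ VB * M ^ p * u n := by
        calc (iter S n v).length ≤ v.length * (M ^ p * u n) :=
              length_iter_le S n v _ (fun a _ => hletter a n)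
          _ ≤ VB * (M ^ p * u n) := Nat.mul_le_mul_right _ (hVB v hv)
          _ = VB * M ^ p * u n := by ring
      have c2 : ((iter S n v).length : ℝ) ≤ ((VB * M ^ p : ℕ) : ℝ) * (u n : ℝ) := by
        push_cast
        exact_mod_cast c1
      have c3 : ((VB * M ^ p : ℕ) : ℝ) * (u n : ℝ) ≤
          ((VB * M ^ p : ℕ) : ℝ) * (Kr * θ ^ n) :=
        mul_le_mul_of_nonneg_left (hupper n) (Nat.cast_nonneg _)
      have c4 : ((VB * M ^ p * K : ℕ) : ℝ) * θ ^ n =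
          ((VB * M ^ p : ℕ) : ℝ) * (Kr * θ ^ n) := by
        rw [hKr_def]; push_cast; ring
      linarith

end SubstLR
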